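/- Let X be a standard normal random variable, θ ∈ ℝ, and ε > 0. Then P(|X − θ| ≤ ε) ≥ (e^{−θ²}/√2) · P(|X| ≤ √2 ε) ≥ √(2/π) · exp(log ε − ε² − θ²). -/

import Mathlib

open Real MeasureTheory

/-- P(|X − θ| ≤ ε) for a standard normal X, written as an integral of the
Gaussian density over [θ−ε, θ+ε]. -/
noncomputable def stdNormalProb (a b : ℝ) : ℝ :=
  (1 / Real.sqrt (2 * Real.pi)) * ∫ x in a..b, Real.exp (-x ^ 2 / 2)

theorem normal_ball_lower_bound (θ ε : ℝ) (hε : 0 < ε) :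
    (Real.exp (-θ ^ 2) / Real.sqrt 2) *
        stdNormalProb (-(Real.sqrt 2 * ε)) (Real.sqrt 2 * ε) ≤
      stdNormalProb (θ - ε) (θ + ε) ∧
    Real.sqrt (2 / Real.pi) * Real.exp (Real.log ε - ε ^ 2 - θ ^ 2) ≤
      (Real.exp (-θ ^ 2) / Real.sqrt 2) *
        stdNormalProb (-(Real.sqrt 2 * ε)) (Real.sqrt 2 * ε) := by
  have hπ : (0:ℝ) < Real.pi := Real.pi_pos
  have hs2 : (0:ℝ) < Real.sqrt 2 := by positivity
  have hs2pi : (0:ℝ) < Real.sqrt (2*Real.pi) := by positivity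
  have hsub : ∫ x in (θ-ε)..(θ+ε), Real.exp (-x^2/2)
      = ∫ u in (-ε)..ε, Real.exp (-(θ+u)^2/2) := by
    rw [intervalIntegral.integral_comp_add_left (fun x => Real.exp (-x^2/2)) θ,
      sub_eq_add_neg]
  have hscale : ∫ x in (-(Real.sqrt 2 * ε))..(Real.sqrt 2 * ε), Real.exp (-x^2/2)
      = Real.sqrt 2 * ∫ u in (-ε)..ε, Real.exp (-u^2) := by
    have h := intervalIntegral.integral_comp_mul_left (a := -ε) (b := ε)
      (fun x => Real.exp (-x^2/2)) (c := Real.sqrt 2) hs2.ne'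
    have h2 : ∀ u : ℝ, Real.exp (-(Real.sqrt 2 * u)^2/2) = Real.exp (-u^2) := by
      intro u
      congr 1
      rw [mul_pow, Real.sq_sqrt (by norm_num : (0:ℝ) ≤ 2)]
      ring
    simp only [h2, mul_neg] at h
    rw [h, smul_eq_mul]
    field_simp
  have hint1 : IntervalIntegrable (fun u => Real.exp (-θ^2) * Real.exp (-u^2))
      volume (-ε) ε := (Continuous.intervalIntegrable (by continuity) _ _)
  have hint2 : IntervalIntegrable (fun u => Real.exp (-(θ+u)^2/2))
      volume (-ε) ε := (Continuous.intervalIntegrable (by continuity) _ _)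
  have hmono : ∫ u in (-ε)..ε, Real.exp (-θ^2) * Real.exp (-u^2)
      ≤ ∫ u in (-ε)..ε, Real.exp (-(θ+u)^2/2) := by
    apply intervalIntegral.integral_mono_on (by linarith) hint1 hint2
    intro x _
    rw [← Real.exp_add]
    apply Real.exp_le_exp.2
    nlinarith [sq_nonneg (θ - x)]
  rw [intervalIntegral.integral_const_mul] at hmono
  have hlow : ∫ u in (-ε)..ε, (fun _ : ℝ => Real.exp (-ε^2)) u
      ≤ ∫ u in (-ε)..ε, Real.exp (-u^2) := by
    apply intervalIntegral.integral_mono_on (by linarith)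
      (intervalIntegrable_const) (Continuous.intervalIntegrable (by continuity) _ _)
    intro x hx
    apply Real.exp_le_exp.2
    nlinarith [hx.1, hx.2]
  rw [intervalIntegral.integral_const, smul_eq_mul,
    show ε - -ε = 2*ε by ring] at hlow
  constructor
  · unfold stdNormalProb
    rw [hsub, hscale]
    have hl : Real.exp (-θ^2) / Real.sqrt 2 *
        ((1 / Real.sqrt (2*Real.pi)) * (Real.sqrt 2 * ∫ u in (-ε)..ε, Real.exp (-u^2)))
        = (1 / Real.sqrt (2*Real.pi)) *
          (Real.exp (-θ^2) * ∫ u in (-ε)..ε, Real.exp (-u^2)) := by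
      field_simp
    rw [hl]
    exact mul_le_mul_of_nonneg_left hmono (by positivity)
  · unfold stdNormalProb
    rw [hscale]
    have key : Real.exp (Real.log ε - ε^2 - θ^2)
        = ε * Real.exp (-ε^2) * Real.exp (-θ^2) := by
      rw [show Real.log ε - ε^2 - θ^2 = Real.log ε + (-ε^2 + -θ^2) by ring,
        Real.exp_add, Real.exp_add, Real.exp_log hε]
      ring
    have hmul : Real.sqrt (2/Real.pi) = 2 / Real.sqrt (2*Real.pi) := by
      rw [eq_div_iff hs2pi.ne', ← Real.sqrt_mul (by positivity),
        show 2/Real.pi * (2*Real.pi) = 4 by field_simp; ring,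
        show (4:ℝ) = 2^2 by norm_num, Real.sqrt_sq (by norm_num)]
    have hr : Real.exp (-θ^2) / Real.sqrt 2 *
        ((1 / Real.sqrt (2*Real.pi)) * (Real.sqrt 2 * ∫ u in (-ε)..ε, Real.exp (-u^2)))
        = (Real.exp (-θ^2) * ∫ u in (-ε)..ε, Real.exp (-u^2)) / Real.sqrt (2*Real.pi) := by
      field_simp
    rw [key, hmul, hr, div_mul_eq_mul_div]
    gcongr ?_ / √(2*Real.pi)
    nlinarith [mul_le_mul_of_nonneg_left hlow (Real.exp_pos (-θ^2)).le]
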